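/- Let T be a measure-preserving map on a probability space (Ω, μ) and A a countable measurable partition with K_w(A) < ∞ for some w ≥ 1 (atoms of measure ≤ e^{-w}). Then there is a constant C such that K_w(A^n) ≤ C n^w for all n ≥ 1, where A^n = ⋁_{j=0}^{n-1} T^{-j}A. -/

import Mathlib

open MeasureTheory

def IsCountablePartition {Ω : Type*} [MeasurableSpace Ω] (μ : Measure Ω)
    (B : ℕ → Set Ω) : Prop :=
  (∀ i, MeasurableSet (B i)) ∧ Pairwise (Function.onFun Disjoint B) ∧ μ (⋃ i, B i) = μ Set.univ

/-- Atom of the `n`-th join `A^n = ⋁_{j=0}^{n-1} T^{-j} A` with itinerary `a`. -/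
def joinAtom {Ω : Type*} (T : Ω → Ω) (A : ℕ → Set Ω) (n : ℕ) (a : Fin n → ℕ) : Set Ω :=
  ⋂ j : Fin n, T^[(j : ℕ)] ⁻¹' A (a j)

/-- `K_w(A^n)`. -/
noncomputable def KwJoin {Ω : Type*} [MeasurableSpace Ω] (μ : Measure Ω) (w : ℝ)
    (T : Ω → Ω) (A : ℕ → Set Ω) (n : ℕ) : ℝ :=
  ∑' a : Fin n → ℕ, (μ (joinAtom T A n a)).toReal *
    |Real.log (μ (joinAtom T A n a)).toReal| ^ w


lemma phi_mono {w x y : ℝ} (hw : 1 ≤ w) (hx : 0 < x) (hxy : x ≤ y) (hy : y ≤ Real.exp (-w)) :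
    x * (-Real.log x) ^ w ≤ y * (-Real.log y) ^ w := by
  have hy0 : 0 < y := lt_of_lt_of_le hx hxy
  set s : ℝ := -Real.log x with hs
  set t : ℝ := -Real.log y with ht
  have hw0 : 0 < w := lt_of_lt_of_le one_pos hw
  have htw : w ≤ t := by
    have := Real.log_le_log hy0 hy
    rw [Real.log_exp] at this
    simp only [ht]; linarith
  have hst : t ≤ s := by
    have := Real.log_le_log hx hxy
    simp only [hs, ht]; linarith
  have ht0 : 0 < t := lt_of_lt_of_le hw0 htw
  have hs0 : 0 < s := lt_of_lt_of_le ht0 hst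
  have hx' : x = Real.exp (-s) := by rw [hs, neg_neg, Real.exp_log hx]
  have hy' : y = Real.exp (-t) := by rw [ht, neg_neg, Real.exp_log hy0]
  rw [hx', hy', Real.rpow_def_of_pos hs0, Real.rpow_def_of_pos ht0, ← Real.exp_add, ← Real.exp_add]
  apply Real.exp_le_exp.2
  have hlog : Real.log s - Real.log t ≤ s / t - 1 := by
    have h1 : Real.log (s / t) ≤ s / t - 1 := Real.log_le_sub_one_of_pos (by positivity)
    rwa [Real.log_div hs0.ne' ht0.ne'] at h1
  have : w * (Real.log s - Real.log t) ≤ s - t := by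
    calc w * (Real.log s - Real.log t) ≤ w * (s / t - 1) := by
          apply mul_le_mul_of_nonneg_left hlog hw0.le
      _ = (w / t) * (s - t) := by field_simp
      _ ≤ 1 * (s - t) := by
          apply mul_le_mul_of_nonneg_right _ (by linarith)
          rw [div_le_one ht0]; exact htw
      _ = s - t := one_mul _
  linarith

lemma sum_rpow_le {n : ℕ} (hn : 1 ≤ n) {w : ℝ} (hw : 1 ≤ w) (x : Fin n → ℝ) (hx : ∀ j, 0 ≤ x j) :
    (∑ j, x j) ^ w ≤ (n : ℝ) ^ (w - 1) * ∑ j, (x j) ^ w := by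
  have hn0 : (0:ℝ) < n := by exact_mod_cast hn
  have h := Real.rpow_arith_mean_le_arith_mean_rpow Finset.univ (fun _ => (n:ℝ)⁻¹)
    (fun j => (n:ℝ) * x j) (fun i _ => by positivity)
    (by simp [Finset.sum_const, Finset.card_univ]; field_simp)
    (fun i _ => mul_nonneg hn0.le (hx i)) hw
  have e1 : ∑ j, (n:ℝ)⁻¹ * ((n:ℝ) * x j) = ∑ j, x j := by
    apply Finset.sum_congr rfl; intro j _; field_simp
  rw [e1] at h
  have e2 : ∀ j : Fin n, (n:ℝ)⁻¹ * ((n:ℝ) * x j) ^ w = (n:ℝ)^(w-1) * (x j) ^ w := by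
    intro j
    rw [Real.mul_rpow hn0.le (hx j), Real.rpow_sub hn0, Real.rpow_one]
    field_simp
  calc (∑ j, x j) ^ w ≤ ∑ j, (n:ℝ)⁻¹ * ((n:ℝ) * x j) ^ w := h
    _ = ∑ j, (n:ℝ)^(w-1) * (x j) ^ w := Finset.sum_congr rfl fun j _ => e2 j
    _ = (n:ℝ)^(w-1) * ∑ j, (x j)^w := by rw [Finset.mul_sum]

lemma tsum_pi_prod : ∀ (n : ℕ) (g : Fin n → ℕ → ENNReal),
    ∑' a : Fin n → ℕ, ∏ j, g j (a j) = ∏ j, ∑' i, g j i := by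
  intro n
  induction n with
  | zero =>
    intro g
    simp only [Finset.univ_eq_empty, Finset.prod_empty]
    rw [tsum_eq_single (fun i => (i : Fin 0).elim0) (by
      intro b hb; exact absurd (funext fun i => i.elim0) hb)]
  | succ n ih =>
    intro g
    rw [← (Fin.consEquiv (fun _ : Fin (n+1) => ℕ)).tsum_eq fun a => ∏ j, g j (a j)]
    rw [ENNReal.tsum_prod']
    simp only [Fin.consEquiv_apply]
    have e1 : ∀ (i : ℕ) (b : Fin n → ℕ),
        ∏ j, g j ((Fin.cons i b : Fin (n+1) → ℕ) j) = g 0 i * ∏ j : Fin n, g j.succ (b j) := by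
      intro i b
      rw [Fin.prod_univ_succ]
      simp
    calc ∑' (i : ℕ) (b : Fin n → ℕ), ∏ j, g j ((Fin.cons i b : Fin (n+1) → ℕ) j)
        = ∑' (i : ℕ), g 0 i * ∑' b : Fin n → ℕ, ∏ j : Fin n, g j.succ (b j) := by
          congr 1; funext i
          simp only [e1 i]
          rw [ENNReal.tsum_mul_left]
      _ = (∑' i, g 0 i) * ∏ j : Fin n, ∑' i, g j.succ i := by
          rw [ENNReal.tsum_mul_right, ih]
      _ = ∏ j, ∑' i, g j i := by rw [Fin.prod_univ_succ]

theorem Kw_join_le {Ω : Type*} [MeasurableSpace Ω]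
    (μ : Measure Ω) [IsProbabilityMeasure μ] (T : Ω → Ω)
    (hT : MeasurePreserving T μ μ) (w : ℝ) (hw : 1 ≤ w)
    (A : ℕ → Set Ω) (hA : IsCountablePartition μ A)
    (hAsmall : ∀ i, μ (A i) ≤ ENNReal.ofReal (Real.exp (-w)))
    (hKA : Summable fun i => (μ (A i)).toReal * |Real.log (μ (A i)).toReal| ^ w) :
    ∃ C : ℝ, ∀ n : ℕ, 1 ≤ n → KwJoin μ w T A n ≤ C * (n : ℝ) ^ w := by
  classical
  set q : ℕ → ℝ := fun i => (μ (A i)).toReal with hq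
  set ℓ : ℕ → ℝ := fun i => |Real.log (q i)| with hℓ
  have hw0 : (0:ℝ) < w := lt_of_lt_of_le one_pos hw
  have hq0 : ∀ i, 0 ≤ q i := fun i => ENNReal.toReal_nonneg
  have hℓ0 : ∀ i, 0 ≤ ℓ i := fun i => abs_nonneg _
  have hqsmall : ∀ i, q i ≤ Real.exp (-w) := fun i =>
    ENNReal.toReal_le_of_le_ofReal (Real.exp_nonneg _) (hAsmall i)
  -- |log q| = -log q when q > 0
  have hℓeq : ∀ i, 0 < q i → ℓ i = -Real.log (q i) := by
    intro i hi
    have : Real.log (q i) < 0 :=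
      Real.log_neg hi (lt_of_le_of_lt (hqsmall i) (Real.exp_lt_one_iff.2 (by linarith)))
    simp [hℓ, abs_of_neg this]
  have hℓw : ∀ i, 0 < q i → w ≤ ℓ i := by
    intro i hi
    rw [hℓeq i hi]
    have := Real.log_le_log hi (hqsmall i)
    rw [Real.log_exp] at this
    linarith
  set K : ℝ := ∑' i, q i * ℓ i ^ w with hKdef
  have hK0 : 0 ≤ K := tsum_nonneg fun i => mul_nonneg (hq0 i) (Real.rpow_nonneg (hℓ0 i) w)
  refine ⟨2 * K, fun n hn => ?_⟩
  have hn0 : (0:ℝ) < n := by exact_mod_cast hn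
  -- ENNReal quantities
  set Le : ℕ → ENNReal := fun i => ENNReal.ofReal (ℓ i ^ w) with hLe
  set Ke : ENNReal := ∑' i, μ (A i) * Le i with hKe
  have hofq : ∀ i, μ (A i) = ENNReal.ofReal (q i) := fun i =>
    (ENNReal.ofReal_toReal (measure_ne_top μ _)).symm
  have hKeK : Ke = ENNReal.ofReal K := by
    rw [hKe, hKdef, ENNReal.ofReal_tsum_of_nonneg
      (fun i => mul_nonneg (hq0 i) (Real.rpow_nonneg (hℓ0 i) w)) hKA]
    apply tsum_congr; intro i
    rw [ENNReal.ofReal_mul (hq0 i), ← hofq]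
  -- measurability
  have hmA : ∀ i, MeasurableSet (A i) := hA.1
  have hmatom : ∀ a : Fin n → ℕ, MeasurableSet (joinAtom T A n a) := fun a =>
    MeasurableSet.iInter fun j => (hmA (a j)).preimage (hT.measurable.iterate j)
  -- atom measure ≤ measure of coordinate set
  have hple : ∀ (a : Fin n → ℕ) (j : Fin n), μ (joinAtom T A n a) ≤ μ (A (a j)) := by
    intro a j
    calc μ (joinAtom T A n a) ≤ μ (T^[(j:ℕ)] ⁻¹' A (a j)) :=
          measure_mono (Set.iInter_subset _ j)
      _ = μ (A (a j)) := (hT.iterate (j:ℕ)).measure_preimage (hmA (a j)).nullMeasurableSet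
  -- disjointness of atoms
  have hdisj : Pairwise (Function.onFun Disjoint fun a : Fin n → ℕ => joinAtom T A n a) := by
    intro a b hab
    obtain ⟨j, hj⟩ : ∃ j, a j ≠ b j := by
      by_contra h; push_neg at h; exact hab (funext h)
    have : Disjoint (T^[(j:ℕ)] ⁻¹' A (a j)) (T^[(j:ℕ)] ⁻¹' A (b j)) :=
      (hA.2.1 hj).preimage _
    exact this.mono (Set.iInter_subset _ j) (Set.iInter_subset _ j)
  -- fiber sums
  have hfiber : ∀ (j : Fin n) (i : ℕ),
      ∑' a : {a : Fin n → ℕ // a j = i}, μ (joinAtom T A n a) ≤ μ (A i) := by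
    intro j i
    have hd : Pairwise (Function.onFun Disjoint fun a : {a : Fin n → ℕ // a j = i} => joinAtom T A n a) :=
      fun a b hab => hdisj (fun h => hab (Subtype.ext h))
    rw [← measure_iUnion hd fun a => hmatom a]
    have : (⋃ a : {a : Fin n → ℕ // a j = i}, joinAtom T A n a) ⊆ T^[(j:ℕ)] ⁻¹' A i := by
      apply Set.iUnion_subset; intro a
      have := Set.iInter_subset (fun k : Fin n => T^[(k:ℕ)] ⁻¹' A (a.1 k)) j
      rwa [a.2] at this
    calc μ _ ≤ μ (T^[(j:ℕ)] ⁻¹' A i) := measure_mono this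
      _ = μ (A i) := (hT.iterate (j:ℕ)).measure_preimage (hmA i).nullMeasurableSet
  -- real per-atom quantities
  set p : (Fin n → ℕ) → ℝ := fun a => (μ (joinAtom T A n a)).toReal with hp
  set P : (Fin n → ℕ) → ℝ := fun a => ∏ j, q (a j) with hP
  have hp0 : ∀ a, 0 ≤ p a := fun a => ENNReal.toReal_nonneg
  have hP0 : ∀ a, 0 ≤ P a := fun a => Finset.prod_nonneg fun j _ => hq0 (a j)
  -- per-atom bound
  have key : ∀ a : Fin n → ℕ,
      p a * |Real.log (p a)| ^ w ≤ (n:ℝ)^(w-1) * ((p a + P a) * ∑ j, ℓ (a j) ^ w) := by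
    intro a
    have hRHS0 : 0 ≤ (n:ℝ)^(w-1) * ((p a + P a) * ∑ j, ℓ (a j) ^ w) := by
      apply mul_nonneg (Real.rpow_nonneg hn0.le _)
      apply mul_nonneg (by positivity)
      exact Finset.sum_nonneg fun j _ => Real.rpow_nonneg (hℓ0 (a j)) w
    rcases eq_or_lt_of_le (hp0 a) with h0 | hpa
    · have hlhs : p a * |Real.log (p a)| ^ w = 0 := by rw [← h0]; simp
      rw [hlhs]; exact hRHS0
    -- p a > 0
    have hqa : ∀ j : Fin n, 0 < q (a j) := by
      intro j
      have h1 : p a ≤ q (a j) := ENNReal.toReal_mono (measure_ne_top μ _) (hple a j)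
      linarith
    set S : ℝ := ∑ j, ℓ (a j) with hS
    have hSP : Real.log (P a) = -S := by
      rw [hP, Real.log_prod fun j _ => (hqa j).ne', hS]
      rw [← Finset.sum_neg_distrib]
      apply Finset.sum_congr rfl; intro j _; rw [hℓeq _ (hqa j)]; ring
    have hPpos : 0 < P a := Finset.prod_pos fun j _ => hqa j
    have hj0 : (⟨0, hn⟩ : Fin n) ∈ Finset.univ := Finset.mem_univ _
    have hSw : w ≤ S := by
      calc w ≤ ℓ (a ⟨0, hn⟩) := hℓw _ (hqa _)
        _ ≤ S := Finset.single_le_sum (fun j _ => hℓ0 (a j)) hj0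
    have hPsmall : P a ≤ Real.exp (-w) := by
      have : P a = Real.exp (-S) := by rw [← hSP, Real.exp_log hPpos]
      rw [this]; exact Real.exp_le_exp.2 (by linarith)
    have hpsmall : p a ≤ Real.exp (-w) := le_trans
      (ENNReal.toReal_mono (measure_ne_top μ _) (hple a ⟨0, hn⟩)) (hqsmall _)
    have hlogp : Real.log (p a) < 0 :=
      Real.log_neg hpa (lt_of_le_of_lt hpsmall (Real.exp_lt_one_iff.2 (by linarith)))
    have habs : |Real.log (p a)| = -Real.log (p a) := abs_of_neg hlogp
    have hstep : p a * |Real.log (p a)| ^ w ≤ (p a + P a) * S ^ w := by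
      rw [habs]
      rcases le_or_gt (P a) (p a) with hc | hc
      · -- big atom
        have h1 : -Real.log (p a) ≤ S := by
          have := Real.log_le_log hPpos hc
          rw [hSP] at this; linarith
        have h2 : (-Real.log (p a)) ^ w ≤ S ^ w :=
          Real.rpow_le_rpow (by linarith) h1 hw0.le
        calc p a * (-Real.log (p a)) ^ w ≤ p a * S ^ w :=
              mul_le_mul_of_nonneg_left h2 (hp0 a)
          _ ≤ (p a + P a) * S ^ w := by
              apply mul_le_mul_of_nonneg_right (by linarith) (Real.rpow_nonneg (by linarith) w)
      · -- small atom
        have h1 : p a * (-Real.log (p a)) ^ w ≤ P a * (-Real.log (P a)) ^ w :=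
          phi_mono hw hpa hc.le hPsmall
        rw [hSP] at h1
        calc p a * (-Real.log (p a)) ^ w ≤ P a * (- -S) ^ w := h1
          _ = P a * S ^ w := by rw [neg_neg]
          _ ≤ (p a + P a) * S ^ w := by
              apply mul_le_mul_of_nonneg_right (by linarith) (Real.rpow_nonneg (by linarith) w)
    calc p a * |Real.log (p a)| ^ w ≤ (p a + P a) * S ^ w := hstep
      _ ≤ (p a + P a) * ((n:ℝ)^(w-1) * ∑ j, ℓ (a j) ^ w) := by
          apply mul_le_mul_of_nonneg_left
            (sum_rpow_le hn hw (fun j => ℓ (a j)) (fun j => hℓ0 (a j))) (by positivity)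
      _ = (n:ℝ)^(w-1) * ((p a + P a) * ∑ j, ℓ (a j) ^ w) := by ring
  -- ENNReal side
  set c : ENNReal := ENNReal.ofReal ((n:ℝ)^(w-1)) with hc
  set Pe : (Fin n → ℕ) → ENNReal := fun a => ∏ j, μ (A (a j)) with hPe
  have hPeP : ∀ a, Pe a = ENNReal.ofReal (P a) := by
    intro a
    rw [hPe, hP, ENNReal.ofReal_prod_of_nonneg (fun j _ => hq0 (a j))]
    exact Finset.prod_congr rfl fun j _ => hofq (a j)
  have hofp : ∀ a, ENNReal.ofReal (p a) = μ (joinAtom T A n a) := fun a =>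
    ENNReal.ofReal_toReal (measure_ne_top μ _)
  have hH : ∀ a : Fin n → ℕ,
      ENNReal.ofReal ((n:ℝ)^(w-1) * ((p a + P a) * ∑ j, ℓ (a j) ^ w))
        = c * ((μ (joinAtom T A n a) + Pe a) * ∑ j, Le (a j)) := by
    intro a
    rw [ENNReal.ofReal_mul (Real.rpow_nonneg hn0.le _),
      ENNReal.ofReal_mul (by positivity),
      ENNReal.ofReal_add (hp0 a) (hP0 a),
      ENNReal.ofReal_sum_of_nonneg (fun j _ => Real.rpow_nonneg (hℓ0 (a j)) w),
      hofp a, ← hPeP a]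
  have T1 : ∀ j : Fin n, ∑' a : Fin n → ℕ, μ (joinAtom T A n a) * Le (a j) ≤ Ke := by
    intro j
    have e := (Equiv.sigmaFiberEquiv (fun a : Fin n → ℕ => a j)).tsum_eq
      (f := fun a : Fin n → ℕ => μ (joinAtom T A n a) * Le (a j))
    rw [← e, ENNReal.tsum_sigma']
    apply ENNReal.tsum_le_tsum
    intro i
    have key2 : ∀ a : {a : Fin n → ℕ // a j = i},
        μ (joinAtom T A n ((Equiv.sigmaFiberEquiv (fun a : Fin n → ℕ => a j)) ⟨i, a⟩))
          * Le (((Equiv.sigmaFiberEquiv (fun a : Fin n → ℕ => a j)) ⟨i, a⟩) j)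
        = μ (joinAtom T A n a.1) * Le i := by
      intro a
      simp only [Equiv.sigmaFiberEquiv, Equiv.coe_fn_mk]
      rw [a.2]
    calc ∑' a : {a : Fin n → ℕ // a j = i},
          μ (joinAtom T A n ((Equiv.sigmaFiberEquiv (fun a : Fin n → ℕ => a j)) ⟨i, a⟩))
            * Le (((Equiv.sigmaFiberEquiv (fun a : Fin n → ℕ => a j)) ⟨i, a⟩) j)
        = ∑' a : {a : Fin n → ℕ // a j = i}, μ (joinAtom T A n a.1) * Le i :=
          tsum_congr key2
      _ = (∑' a : {a : Fin n → ℕ // a j = i}, μ (joinAtom T A n a.1)) * Le i :=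
          ENNReal.tsum_mul_right
      _ ≤ μ (A i) * Le i := mul_le_mul_left (hfiber j i) _
  have hone : ∑' i, μ (A i) = 1 := by
    rw [← measure_iUnion hA.2.1 hA.1, hA.2.2, measure_univ]
  have T2 : ∀ j : Fin n, ∑' a : Fin n → ℕ, Pe a * Le (a j) = Ke := by
    intro j
    have e1 : ∀ a : Fin n → ℕ, Pe a * Le (a j)
        = ∏ k, (μ (A (a k)) * if k = j then Le (a k) else 1) := by
      intro a
      rw [Finset.prod_mul_distrib, Finset.prod_ite_eq' Finset.univ j (fun k => Le (a k))]
      simp [hPe]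
    calc ∑' a : Fin n → ℕ, Pe a * Le (a j)
        = ∑' a : Fin n → ℕ, ∏ k, (μ (A (a k)) * if k = j then Le (a k) else 1) :=
          tsum_congr e1
      _ = ∏ k : Fin n, ∑' i, (μ (A i) * if k = j then Le i else 1) :=
          tsum_pi_prod n (fun k i => μ (A i) * if k = j then Le i else 1)
      _ = ∏ k : Fin n, (if k = j then Ke else 1) := by
          apply Finset.prod_congr rfl
          intro k _
          by_cases hk : k = j
          · simp only [hk, if_true, hKe]
          · simp only [hk, if_false, mul_one, hone]
      _ = Ke := by
          rw [Finset.prod_ite_eq' Finset.univ j (fun _ => Ke)]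
          simp
  have main : ∑' a : Fin n → ℕ, ENNReal.ofReal (p a * |Real.log (p a)| ^ w)
      ≤ ENNReal.ofReal (2 * K * (n:ℝ) ^ w) := by
    have hnn : (n : ENNReal) = ENNReal.ofReal (n:ℝ) := by
      rw [ENNReal.ofReal_natCast]
    calc ∑' a : Fin n → ℕ, ENNReal.ofReal (p a * |Real.log (p a)| ^ w)
        ≤ ∑' a : Fin n → ℕ, c * ((μ (joinAtom T A n a) + Pe a) * ∑ j, Le (a j)) := by
          apply ENNReal.tsum_le_tsum
          intro a
          rw [← hH a]
          exact ENNReal.ofReal_le_ofReal (key a)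
      _ = c * ∑' a : Fin n → ℕ, ∑ j, (μ (joinAtom T A n a) * Le (a j) + Pe a * Le (a j)) := by
          rw [ENNReal.tsum_mul_left]
          congr 1
          apply tsum_congr
          intro a
          rw [Finset.mul_sum]
          apply Finset.sum_congr rfl
          intro j _
          rw [add_mul]
      _ = c * ∑ j : Fin n, ∑' a : Fin n → ℕ,
            (μ (joinAtom T A n a) * Le (a j) + Pe a * Le (a j)) := by
          rw [Summable.tsum_finsetSum (fun j _ => ENNReal.summable)]
      _ ≤ c * ∑ j : Fin n, (Ke + Ke) := by
          apply mul_le_mul_right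
          apply Finset.sum_le_sum
          intro j _
          rw [ENNReal.tsum_add]
          exact add_le_add (T1 j) (le_of_eq (T2 j))
      _ = c * ((n : ENNReal) * (Ke + Ke)) := by
          rw [Finset.sum_const, Finset.card_univ, Fintype.card_fin, nsmul_eq_mul]
      _ = ENNReal.ofReal (2 * K * (n:ℝ) ^ w) := by
          rw [hKeK, hnn, hc, ← ENNReal.ofReal_add hK0 hK0,
            ← ENNReal.ofReal_mul hn0.le, ← ENNReal.ofReal_mul (Real.rpow_nonneg hn0.le _)]
          congr 1
          have hnw : (n:ℝ)^(w-1) * (n:ℝ) = (n:ℝ)^w := by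
            nth_rewrite 2 [← Real.rpow_one (n:ℝ)]
            rw [← Real.rpow_add hn0]
            norm_num
          calc (n:ℝ)^(w-1) * ((n:ℝ) * (K + K)) = ((n:ℝ)^(w-1) * (n:ℝ)) * (K + K) := by ring
            _ = 2 * K * (n:ℝ)^w := by rw [hnw]; ring
  -- back to reals
  have hne : ∑' a : Fin n → ℕ, ENNReal.ofReal (p a * |Real.log (p a)| ^ w) ≠ ⊤ :=
    ne_top_of_le_ne_top ENNReal.ofReal_ne_top main
  have heq : KwJoin μ w T A n
      = (∑' a : Fin n → ℕ, ENNReal.ofReal (p a * |Real.log (p a)| ^ w)).toReal := by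
    rw [ENNReal.tsum_toReal_eq (fun a => ENNReal.ofReal_ne_top)]
    apply tsum_congr
    intro a
    rw [ENNReal.toReal_ofReal (mul_nonneg (hp0 a) (Real.rpow_nonneg (abs_nonneg _) w))]
  rw [heq]
  calc (∑' a : Fin n → ℕ, ENNReal.ofReal (p a * |Real.log (p a)| ^ w)).toReal
      ≤ (ENNReal.ofReal (2 * K * (n:ℝ) ^ w)).toReal :=
        ENNReal.toReal_mono ENNReal.ofReal_ne_top main
    _ = 2 * K * (n:ℝ) ^ w := ENNReal.toReal_ofReal (by positivity)
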